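/- (Montel's theorem) Let h_1, …, h_t ∈ ℝ^d be vectors such that the additive subgroup of ℝ^d they generate is dense in ℝ^d, let n be a natural number, and let f : ℝ^d → ℝ be a continuous function satisfying Δ_{h_k}^{n+1} f(x) = 0 for all x ∈ ℝ^d and all k = 1, …, t. Then f is an ordinary polynomial. -/

import Mathlib

/-- The forward difference operator: `(Δ_h f)(x) = f(x + h) - f(x)`. -/
def fdiff {G M : Type*} [Add G] [Sub M] (h : G) (f : G → M) : G → M :=
  fun x => f (x + h) - f x

open Finset Function Polynomial
open scoped fwdDiff
set_option linter.unusedSectionVars false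
set_option linter.unnecessarySimpa false
set_option maxHeartbeats 1000000

namespace MontelAux



variable {M G : Type*} [AddCommMonoid M] [AddCommGroup G]

lemma iter_zero (g : M) (m : ℕ) : Δ_[g] ^[m] (fun _ : M => (0 : G)) = fun _ => 0 := by
  induction m with
  | zero => rfl
  | succ m IH => rw [iterate_succ_apply, show Δ_[g] (fun _ : M => (0:G)) = fun _ => 0 by
      funext x; simp [fwdDiff], IH]

lemma funeq {f : M → G} (h : ∀ x, f x = 0) : f = fun _ => 0 := funext h

lemma iter_eq_zero_of_le {g : M} {f : M → G} {a b : ℕ} (hab : a ≤ b)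
    (h : ∀ x, Δ_[g] ^[a] f x = 0) : ∀ x, Δ_[g] ^[b] f x = 0 := by
  intro x
  obtain ⟨c, rfl⟩ := Nat.exists_eq_add_of_le hab
  rw [Nat.add_comm, iterate_add_apply, funeq h, iter_zero]

lemma fwdDiff_shift (v w : M) (f : M → G) :
    Δ_[v] (fun x => f (x + w)) = fun x => Δ_[v] f (x + w) := by
  funext x
  simp only [fwdDiff, add_right_comm]

lemma fwdDiff_iter_shift (v w : M) (f : M → G) (m : ℕ) :
    Δ_[v] ^[m] (fun x => f (x + w)) = fun x => Δ_[v] ^[m] f (x + w) := by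
  induction m generalizing f with
  | zero => rfl
  | succ m IH =>
    rw [iterate_succ_apply, fwdDiff_shift, IH (Δ_[v] f)]
    funext x
    rw [← iterate_succ_apply]

lemma fwdDiff_comm (u v : M) (f : M → G) :
    Δ_[v] (Δ_[u] f) = Δ_[u] (Δ_[v] f) := by
  funext x
  simp only [fwdDiff, add_right_comm]
  abel

lemma fwdDiff_comm_iter (u v : M) (f : M → G) (b : ℕ) :
    Δ_[v] ^[b] (Δ_[u] f) = Δ_[u] (Δ_[v] ^[b] f) := by
  induction b generalizing f with
  | zero => rfl
  | succ b IH =>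
    rw [iterate_succ_apply, fwdDiff_comm, IH (Δ_[v] f), ← iterate_succ_apply]

lemma fwdDiff_add_vec (u v : M) (f : M → G) :
    Δ_[u + v] f = (fun x => Δ_[u] f (x + v)) + Δ_[v] f := by
  funext x
  simp only [fwdDiff, Pi.add_apply, add_right_comm]
  abel

lemma add_order : ∀ (m : ℕ) (u v : M) (a b : ℕ), a + b = m → ∀ f : M → G,
    (∀ x, Δ_[u] ^[a] f x = 0) → (∀ x, Δ_[v] ^[b] f x = 0) →
    ∀ x, Δ_[u + v] ^[a + b] f x = 0 := by
  intro m
  induction m with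
  | zero =>
    intro u v a b hab f hu hv x
    obtain ⟨rfl, rfl⟩ := Nat.add_eq_zero.mp hab
    simpa using hu x
  | succ m IH =>
    intro u v a b hab f hu hv x
    rcases Nat.eq_zero_or_pos a with rfl | ha
    · have hf : f = fun _ => 0 := funeq (by simpa using hu)
      subst hf; simp [iter_zero]
    rcases Nat.eq_zero_or_pos b with rfl | hb
    · have hf : f = fun _ => 0 := funeq (by simpa using hv)
      subst hf; simp [iter_zero]
    obtain ⟨a, rfl⟩ := Nat.exists_eq_add_of_lt ha
    obtain ⟨b, rfl⟩ := Nat.exists_eq_add_of_lt hb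
    simp only [Nat.zero_add] at *
    -- goal : Δ_[u+v] ^[(a+1)+(b+1)] f x = 0
    have hstep : (a + 1) + (b + 1) = m + 1 := hab
    have hm : (a + 1) + b = m := by omega
    rw [show (a+1)+(b+1) = m + 1 by omega, iterate_succ_apply, fwdDiff_add_vec]
    rw [fwdDiff_iter_add]
    have h1 : ∀ y, Δ_[u + v] ^[m] (fun x => Δ_[u] f (x + v)) y = 0 := by
      have e1 : ∀ y, Δ_[u] ^[a] (fun x => Δ_[u] f (x + v)) y = 0 := by
        intro y
        rw [fwdDiff_iter_shift, ← iterate_succ_apply]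
        exact hu _
      have e2 : ∀ y, Δ_[v] ^[b+1] (fun x => Δ_[u] f (x + v)) y = 0 := by
        intro y
        rw [fwdDiff_iter_shift, fwdDiff_comm_iter u v f (b+1), funeq hv]
        simp [fwdDiff]
      have := IH u v a (b+1) (by omega) _ e1 e2
      intro y; have := this y; rwa [show a + (b+1) = m by omega] at this
    have h2 : ∀ y, Δ_[u + v] ^[m] (Δ_[v] f) y = 0 := by
      have e1 : ∀ y, Δ_[u] ^[a+1] (Δ_[v] f) y = 0 := by
        intro y
        rw [fwdDiff_comm_iter v u f (a+1), funeq hu]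
        simp [fwdDiff]
      have e2 : ∀ y, Δ_[v] ^[b] (Δ_[v] f) y = 0 := by
        intro y; rw [← iterate_succ_apply]; exact hv _
      have := IH u v (a+1) b (by omega) _ e1 e2
      intro y; have := this y; rwa [show (a+1) + b = m by omega] at this
    rw [Pi.add_apply, h1, h2, add_zero]

lemma fwdDiff_nsmul_eq (u : M) (f : M → G) (c : ℕ) :
    Δ_[c • u] f = fun x => ∑ j ∈ Finset.range c, Δ_[u] f (x + j • u) := by
  induction c with
  | zero => funext x; simp [fwdDiff]
  | succ c IH =>
    funext x
    have : Δ_[(c+1) • u] f x = Δ_[u] f (x + c • u) + Δ_[c • u] f x := by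
      simp only [fwdDiff, succ_nsmul, ← add_assoc]
      abel
    rw [this, IH, Finset.sum_range_succ]
    ring_nf
    abel

lemma nsmul_order (u : M) : ∀ (a : ℕ) (f : M → G),
    (∀ x, Δ_[u] ^[a] f x = 0) → ∀ (c : ℕ) (x : M), Δ_[c • u] ^[a] f x = 0 := by
  intro a
  induction a with
  | zero => intro f hu c x; simpa using hu x
  | succ a IH =>
    intro f hu c x
    rw [iterate_succ_apply, fwdDiff_nsmul_eq,
      show (fun x => ∑ j ∈ Finset.range c, Δ_[u] f (x + j • u))
         = ∑ j ∈ Finset.range c, (fun x => Δ_[u] f (x + j • u)) by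
        funext y; simp, fwdDiff_iter_finset_sum]
    rw [Finset.sum_apply]
    refine Finset.sum_eq_zero fun j _ => ?_
    refine IH _ (fun y => ?_) c x
    rw [fwdDiff_iter_shift, ← iterate_succ_apply]
    exact hu _


section Group
variable {H G : Type*} [AddCommGroup H] [AddCommGroup G]

lemma fwdDiff_neg_fun (v : H) (f : H → G) :
    Δ_[v] (fun x => -(f x)) = fun x => -(Δ_[v] f x) := by
  funext x; simp only [fwdDiff]; abel

lemma fwdDiff_iter_neg_fun (v : H) (f : H → G) (m : ℕ) :
    Δ_[v] ^[m] (fun x => -(f x)) = fun x => -(Δ_[v] ^[m] f x) := by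
  induction m generalizing f with
  | zero => rfl
  | succ m IH =>
    rw [iterate_succ_apply, fwdDiff_neg_fun, IH (Δ_[v] f)]
    funext x
    rw [← iterate_succ_apply]

lemma neg_formula (u : H) (f : H → G) (m : ℕ) (x : H) :
    Δ_[-u] ^[m] f x = (-1 : ℤ) ^ m • Δ_[u] ^[m] f (x + m • (-u)) := by
  induction m generalizing f x with
  | zero => simp
  | succ m IH =>
    have key : Δ_[-u] f = fun y => -(Δ_[u] f (y + (-u))) := by
      funext y
      simp only [fwdDiff, neg_add_cancel_right]
      abel
    rw [iterate_succ_apply, IH (Δ_[-u] f), key]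
    have e1 : Δ_[u] ^[m] (fun y => -(Δ_[u] f (y + (-u))))
        = fun y => -(Δ_[u] ^[m+1] f (y + (-u))) := by
      rw [show (fun y => -(Δ_[u] f (y + (-u)))) = (fun y => -((fun z => Δ_[u] f (z + (-u))) y))
          from rfl, fwdDiff_iter_neg_fun, fwdDiff_iter_shift]
      funext y
      rw [← iterate_succ_apply]
    rw [e1]
    rw [succ_nsmul, pow_succ, mul_smul, ← add_assoc]
    simp [smul_neg]

lemma neg_order (u : H) (a : ℕ) (f : H → G)
    (h : ∀ x, Δ_[u] ^[a] f x = 0) : ∀ x, Δ_[-u] ^[a] f x = 0 := by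
  intro x
  rw [neg_formula, h, smul_zero]

lemma zsmul_order (u : H) (a : ℕ) (f : H → G)
    (h : ∀ x, Δ_[u] ^[a] f x = 0) (c : ℤ) : ∀ x, Δ_[c • u] ^[a] f x = 0 := by
  obtain ⟨m, rfl | rfl⟩ := Int.eq_nat_or_neg c
  · rw [natCast_zsmul]
    exact nsmul_order u a f h m
  · rw [neg_zsmul, natCast_zsmul]
    exact neg_order _ a f (nsmul_order u a f h m)

lemma sum_order {ι : Type*} (s : Finset ι) (w : ι → H) (ord : ι → ℕ) (f : H → G)
    (hw : ∀ i ∈ s, ∀ x, Δ_[w i] ^[ord i] f x = 0) :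
    ∀ x, Δ_[∑ i ∈ s, w i] ^[(∑ i ∈ s, ord i) + 1] f x = 0 := by
  classical
  induction s using Finset.cons_induction with
  | empty =>
    intro x
    simp [fwdDiff]
  | cons i s hi IH =>
    intro x
    rw [Finset.sum_cons, Finset.sum_cons]
    have h1 := hw i (Finset.mem_cons_self i s)
    have h2 := IH (fun j hj => hw j (Finset.mem_cons_of_mem hj))
    have := add_order (ord i + ((∑ j ∈ s, ord j) + 1)) (w i) (∑ j ∈ s, w j)
      (ord i) ((∑ j ∈ s, ord j) + 1) rfl f h1 h2 x
    rwa [show ord i + (∑ j ∈ s, ord j) + 1 = ord i + ((∑ j ∈ s, ord j) + 1) by omega]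


end Group

lemma closure_step {d t n : ℕ} (h : Fin t → (Fin d → ℝ)) (f : (Fin d → ℝ) → ℝ)
    (hdiff : ∀ k x, Δ_[h k] ^[n+1] f x = 0) :
    ∀ g ∈ AddSubgroup.closure (Set.range h), ∀ x, Δ_[g] ^[t*(n+1)+1] f x = 0 := by
  intro g hg x
  rw [← Submodule.span_int_eq_addSubgroupClosure, Submodule.mem_toAddSubgroup] at hg
  obtain ⟨c, rfl⟩ := (Submodule.mem_span_range_iff_exists_fun ℤ).mp hg
  have := sum_order (Finset.univ : Finset (Fin t)) (fun i => c i • h i) (fun _ => n+1) f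
    (fun i _ => zsmul_order (h i) (n+1) f (hdiff i) (c i)) x
  rwa [show (∑ _i : Fin t, (n+1)) + 1 = t*(n+1)+1 by
    simp [Finset.sum_const, Finset.card_univ, smul_eq_mul]] at this

lemma dense_step {d : ℕ} {S : AddSubgroup (Fin d → ℝ)} (hdense : Dense (S : Set (Fin d → ℝ)))
    (N : ℕ) (f : (Fin d → ℝ) → ℝ) (hf : Continuous f)
    (hcl : ∀ g ∈ S, ∀ x, Δ_[g] ^[N] f x = 0) :
    ∀ (g : Fin d → ℝ) (x : Fin d → ℝ), Δ_[g] ^[N] f x = 0 := by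
  intro g x
  set F : (Fin d → ℝ) → ℝ :=
    fun g => ∑ k ∈ Finset.range (N+1), ((-1:ℤ)^(N-k) * N.choose k) • f (x + (k:ℝ) • g) with hF
  have hFeq : ∀ g, F g = Δ_[g] ^[N] f x := by
    intro g
    rw [fwdDiff_iter_eq_sum_shift, hF]
    refine Finset.sum_congr rfl fun k _ => ?_
    rw [Nat.cast_smul_eq_nsmul]
  have hFc : Continuous F := by
    refine continuous_finset_sum _ fun k _ => ?_
    exact (hf.comp (continuous_const.add (continuous_const_smul (k:ℝ)))).const_smul (((-1:ℤ)^(N-k) * N.choose k : ℤ))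
  have hF0 : F = fun _ => 0 := by
    refine Continuous.ext_on hdense hFc continuous_const ?_
    intro g hg
    rw [hFeq]
    exact hcl g hg x
  rw [← hFeq, hF0]

lemma line_reduction {d N : ℕ} (f : (Fin d → ℝ) → ℝ)
    (key : ∀ g x, Δ_[g] ^[N] f x = 0) (x v : Fin d → ℝ) :
    ∀ (s t : ℝ), Δ_[s] ^[N] (fun t => f (x + t • v)) t = 0 := by
  intro s t
  rw [fwdDiff_iter_eq_sum_shift]
  have h2 := fwdDiff_iter_eq_sum_shift (s • v) f N (x + t • v)
  rw [key (s • v) (x + t • v)] at h2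
  rw [show (0:ℝ) = ∑ k ∈ Finset.range (N+1),
      ((-1:ℤ)^(N-k) * N.choose k) • f (x + t • v + k • (s • v)) from h2]
  refine Finset.sum_congr rfl fun k _ => ?_
  congr 1
  rw [← Nat.cast_smul_eq_nsmul ℝ k s, ← Nat.cast_smul_eq_nsmul ℝ k (s • v)]
  rw [add_smul, smul_smul, smul_eq_mul, add_assoc]


lemma oneD (N : ℕ) (φ : ℝ → ℝ) (hφ : Continuous φ)
    (hΔ : ∀ s t, Δ_[s] ^[N] φ t = 0) :
    ∃ p : Polynomial ℝ, p.degree < N ∧ ∀ t, φ t = p.eval t := by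
  have hvanish : ∀ (s : ℝ) (k : ℕ), N ≤ k → ∀ t, Δ_[s] ^[k] φ t = 0 :=
    fun s k hk => iter_eq_zero_of_le hk (hΔ s)
  have GN : ∀ (s t₀ : ℝ) (m : ℕ),
      φ (t₀ + m • s) = ∑ k ∈ range N, (m.choose k : ℝ) * Δ_[s] ^[k] φ t₀ := by
    intro s t₀ m
    rw [shift_eq_sum_fwdDiff_iter s φ m t₀]
    set g : ℕ → ℝ := fun k => (m.choose k : ℝ) * Δ_[s] ^[k] φ t₀ with hg
    have e1 : ∑ k ∈ range (m+1), m.choose k • Δ_[s] ^[k] φ t₀ = ∑ k ∈ range (m+1), g k := by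
      refine Finset.sum_congr rfl fun k _ => ?_
      rw [hg]; simp [nsmul_eq_mul]
    have e2 : ∑ k ∈ range (m+1), g k = ∑ k ∈ range (max (m+1) N), g k := by
      refine Finset.sum_subset (Finset.range_subset_range.mpr (le_max_left _ _)) ?_
      intro k _ hk'
      have hmk : m < k := by simpa using hk'
      simp [hg, Nat.choose_eq_zero_of_lt hmk]
    have e3 : ∑ k ∈ range N, g k = ∑ k ∈ range (max (m+1) N), g k := by
      refine Finset.sum_subset (Finset.range_subset_range.mpr (le_max_right _ _)) ?_
      intro k _ hk'
      have hNk : N ≤ k := by simpa using hk'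
      simp [hg, hvanish s k hNk t₀]
    rw [e1, e2, ← e3]
  set cp : ℕ → Polynomial ℝ := fun k => Polynomial.C ((k.factorial : ℝ))⁻¹ * descPochhammer ℝ k
    with hcp
  have hfac : ∀ k : ℕ, (k.factorial : ℝ) ≠ 0 :=
    fun k => Nat.cast_ne_zero.mpr k.factorial_ne_zero
  have hcp_eval : ∀ (k m : ℕ), (cp k).eval (m : ℝ) = m.choose k := by
    intro k m
    rw [hcp]
    simp only [eval_mul, eval_C]
    rw [descPochhammer_eval_eq_descFactorial, Nat.descFactorial_eq_factorial_mul_choose]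
    push_cast
    rw [← mul_assoc, inv_mul_cancel₀ (hfac k), one_mul]
  set Qp : ℕ → ℕ → Polynomial ℝ := fun q j =>
    ∑ k ∈ range N, Polynomial.C (Δ_[(q:ℝ)⁻¹] ^[k] φ (-(j:ℝ))) *
      (cp k).comp (Polynomial.C (q:ℝ) * Polynomial.X + Polynomial.C ((q:ℝ)*(j:ℝ))) with hQp
  have hQeval : ∀ (q j m : ℕ), 0 < q →
      (Qp q j).eval (-(j:ℝ) + m • (q:ℝ)⁻¹) = φ (-(j:ℝ) + m • (q:ℝ)⁻¹) := by
    intro q j m hq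
    have hq0 : (q:ℝ) ≠ 0 := Nat.cast_ne_zero.mpr hq.ne'
    rw [hQp, GN (q:ℝ)⁻¹ (-(j:ℝ)) m]
    simp only [eval_finset_sum, eval_mul, eval_C, eval_comp, eval_add, eval_X]
    refine Finset.sum_congr rfl fun k _ => ?_
    rw [show (q:ℝ) * (-(j:ℝ) + m • (q:ℝ)⁻¹) + (q:ℝ)*(j:ℝ) = (m:ℝ) by
      rw [nsmul_eq_mul]; field_simp; ring]
    rw [hcp_eval k m]
    ring
  have hAgreeNat : ∀ (q j i : ℕ), 0 < q → (Qp q j).eval (i:ℝ) = φ (i:ℝ) := by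
    intro q j i hq
    have hq0 : (q:ℝ) ≠ 0 := Nat.cast_ne_zero.mpr hq.ne'
    have hpt : (i:ℝ) = -(j:ℝ) + (q*(i+j)) • (q:ℝ)⁻¹ := by
      rw [nsmul_eq_mul]
      push_cast
      field_simp
      try ring
    rw [hpt, hQeval q j _ hq]
  have hQeq : ∀ (q j : ℕ), 0 < q → Qp q j = Qp 1 0 := by
    intro q j hq
    apply Polynomial.eq_of_infinite_eval_eq
    apply Set.infinite_of_injective_forall_mem (f := fun i : ℕ => (i:ℝ)) Nat.cast_injective
    intro i
    simp only [Set.mem_setOf_eq]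
    rw [hAgreeNat q j i hq, hAgreeNat 1 0 i one_pos]
  have hRat : ∀ r : ℚ, φ (r:ℝ) = (Qp 1 0).eval (r:ℝ) := by
    intro r
    have hq : 0 < r.den := r.pos
    have hq0 : ((r.den:ℕ):ℝ) ≠ 0 := Nat.cast_ne_zero.mpr hq.ne'
    set j : ℕ := r.num.natAbs with hj
    have hge : (0:ℤ) ≤ r.num + (j:ℤ) * (r.den:ℤ) := by
      have habs : ((j:ℤ)) = |r.num| := by rw [hj]; exact (Int.abs_eq_natAbs r.num).symm
      have h1 : (1:ℤ) ≤ (r.den:ℤ) := by exact_mod_cast hq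
      nlinarith [neg_abs_le r.num, abs_nonneg r.num]
    set m : ℕ := (r.num + (j:ℤ)*(r.den:ℤ)).toNat with hm
    have hmz : ((m:ℤ)) = r.num + (j:ℤ)*(r.den:ℤ) := Int.toNat_of_nonneg hge
    have hmr : (m:ℝ) = (r.num:ℝ) + (j:ℝ)*(r.den:ℝ) := by exact_mod_cast congrArg (Int.cast : ℤ → ℝ) hmz
    have hpt : (r:ℝ) = -(j:ℝ) + m • ((r.den:ℕ):ℝ)⁻¹ := by
      rw [nsmul_eq_mul, hmr, Rat.cast_def]
      field_simp
      try ring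
    rw [hpt, ← hQeq r.den j hq, hQeval r.den j m hq]
  have hall : ∀ t, φ t = (Qp 1 0).eval t := by
    have : φ = fun t => (Qp 1 0).eval t := by
      refine Continuous.ext_on Rat.denseRange_cast hφ (Polynomial.continuous _) ?_
      rintro _ ⟨r, rfl⟩
      exact hRat r
    exact fun t => congrFun this t
  refine ⟨Qp 1 0, ?_, hall⟩
  rcases Nat.eq_zero_or_pos N with rfl | hN
  · rw [hQp]
    simp only [range_zero, Finset.sum_empty]
    simpa using WithBot.bot_lt_coe 0
  · have hnd : (Qp 1 0).natDegree ≤ N - 1 := by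
      apply Polynomial.natDegree_sum_le_of_forall_le
      intro k hk
      refine (Polynomial.natDegree_C_mul_le _ _).trans ?_
      refine (Polynomial.natDegree_comp_le).trans ?_
      have h1 : (cp k).natDegree ≤ k := by
        rw [hcp]
        refine (Polynomial.natDegree_C_mul_le _ _).trans ?_
        exact (descPochhammer_natDegree (R := ℝ) k).le
      have h2 : (Polynomial.C ((1:ℕ):ℝ) * Polynomial.X
          + Polynomial.C (((1:ℕ):ℝ)*((0:ℕ):ℝ))).natDegree ≤ 1 := by
        refine (Polynomial.natDegree_add_le _ _).trans ?_
        simp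
      refine le_trans (Nat.mul_le_mul h1 h2) ?_
      have := Finset.mem_range.mp hk
      omega
    have hdeg : (Qp 1 0).degree ≤ ((N-1 : ℕ) : WithBot ℕ) :=
      Polynomial.degree_le_natDegree.trans (by exact_mod_cast hnd)
    refine lt_of_le_of_lt hdeg ?_
    exact_mod_cast Nat.sub_lt hN one_pos




lemma assembly (N : ℕ) : ∀ (d : ℕ) (F : (Fin d → ℝ) → ℝ),
    (∀ x v : Fin d → ℝ, ∃ p : Polynomial ℝ, p.degree < N ∧ ∀ t : ℝ, F (x + t • v) = p.eval t) →
    ∃ P : MvPolynomial (Fin d) ℝ, ∀ x, F x = MvPolynomial.eval x P := by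
  intro d
  induction d with
  | zero =>
    intro F _
    refine ⟨MvPolynomial.C (F 0), fun x => ?_⟩
    have hx : x = 0 := funext fun i => i.elim0
    rw [hx, MvPolynomial.eval_C]
  | succ d IH =>
    intro F hF
    set s : Finset ℝ := (Finset.range N).image (Nat.cast) with hs
    have hvs : Set.InjOn id (s : Set ℝ) := Function.injective_id.injOn
    have hcard : s.card = N := by
      rw [hs, Finset.card_image_of_injective _ Nat.cast_injective, Finset.card_range]
    have harith : ∀ (r c : ℝ) (y w : Fin d → ℝ) (t : ℝ),
        (Fin.cons r y : Fin (d+1) → ℝ) + t • (Fin.cons c w : Fin (d+1) → ℝ)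
          = (Fin.cons (r + t*c) (y + t • w) : Fin (d+1) → ℝ) := by
      intro r c y w t
      funext i
      refine Fin.cases ?_ (fun i => ?_) i <;>
        simp [Pi.add_apply, Pi.smul_apply]
    have hLag : ∀ (y : Fin d → ℝ) (r : ℝ),
        F (Fin.cons r y) = ∑ i ∈ s, (Lagrange.basis s id i).eval r * F (Fin.cons i y) := by
      intro y r
      obtain ⟨p, hdeg, hp⟩ := hF (Fin.cons 0 y) (Fin.cons 1 0)
      have hval : ∀ t : ℝ, F (Fin.cons t y) = p.eval t := by
        intro t
        have h := hp t
        rw [harith] at h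
        simpa using h
      rw [hval r]
      have hip : p = Lagrange.interpolate s id (fun i => p.eval i) :=
        Lagrange.eq_interpolate hvs (by rw [hcard]; exact hdeg)
      conv_lhs => rw [hip]
      rw [Lagrange.interpolate_apply, Polynomial.eval_finset_sum]
      refine Finset.sum_congr rfl fun i hi => ?_
      rw [Polynomial.eval_mul, Polynomial.eval_C, hval i, mul_comm]
    have hsec : ∀ c : ℝ, ∃ P : MvPolynomial (Fin d) ℝ,
        ∀ y, F (Fin.cons c y) = MvPolynomial.eval y P := by
      intro c
      refine IH (fun y => F (Fin.cons c y)) ?_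
      intro y w
      obtain ⟨p, hdeg, hp⟩ := hF (Fin.cons c y) (Fin.cons 0 w)
      refine ⟨p, hdeg, fun t => ?_⟩
      have h := hp t
      rw [harith] at h
      simpa using h
    choose Psec hPsec using hsec
    refine ⟨∑ i ∈ s, Polynomial.eval₂ MvPolynomial.C (MvPolynomial.X 0) (Lagrange.basis s id i) *
      MvPolynomial.rename Fin.succ (Psec i), fun x => ?_⟩
    rw [map_sum]
    have hx : x = Fin.cons (x 0) (fun i => x i.succ) := (Fin.cons_self_tail x).symm
    conv_lhs => rw [hx]
    rw [hLag]
    refine Finset.sum_congr rfl fun i hi => ?_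
    rw [map_mul]
    congr 1
    · rw [Polynomial.hom_eval₂]
      have hcomp : (MvPolynomial.eval x).comp (MvPolynomial.C : ℝ →+* MvPolynomial (Fin (d+1)) ℝ)
          = RingHom.id ℝ := RingHom.ext fun a => MvPolynomial.eval_C a
      rw [hcomp, MvPolynomial.eval_X]
      rfl
    · rw [MvPolynomial.eval_rename]
      exact hPsec i (fun j => x j.succ)


end MontelAux

/-- **Montel's theorem.** -/
theorem montel {d t : ℕ} (h : Fin t → (Fin d → ℝ))
    (hdense : Dense ((AddSubgroup.closure (Set.range h) : AddSubgroup (Fin d → ℝ)) :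
      Set (Fin d → ℝ)))
    (n : ℕ) (f : (Fin d → ℝ) → ℝ) (hf : Continuous f)
    (hdiff : ∀ k : Fin t, ∀ x, (fdiff (h k))^[n + 1] f x = 0) :
    ∃ P : MvPolynomial (Fin d) ℝ, ∀ x, f x = MvPolynomial.eval x P := by
  have hdiff' : ∀ (k : Fin t) (x : Fin d → ℝ), Δ_[h k] ^[n+1] f x = 0 := hdiff
  have hclosure := MontelAux.closure_step h f hdiff'
  have key : ∀ g x : Fin d → ℝ, Δ_[g] ^[t*(n+1)+1] f x = 0 :=
    MontelAux.dense_step hdense (t*(n+1)+1) f hf hclosure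
  have lp : ∀ x v : Fin d → ℝ, ∃ p : Polynomial ℝ,
      p.degree < (t*(n+1)+1 : ℕ) ∧ ∀ s : ℝ, f (x + s • v) = p.eval s := by
    intro x v
    exact MontelAux.oneD (t*(n+1)+1) (fun s => f (x + s • v))
      (hf.comp (continuous_const.add (continuous_id.smul continuous_const)))
      (MontelAux.line_reduction f key x v)
  exact MontelAux.assembly (t*(n+1)+1) d f lp
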